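/- Let Ψ : ℝ → ℝ be a nonnegative convex function vanishing only at 0, with ∫ exp(-λΨ(t)) dt < ∞ for all λ > 0. Then the map R : (0,∞) → (0,∞) defined by R(λ) = (∫ Ψ(t) e^{-λΨ(t)} dt) / (∫ e^{-λΨ(t)} dt) satisfies lim_{λ→0⁺} R(λ) = ∞. -/

import Mathlib

open MeasureTheory Real Filter Set

theorem orlicz_ratio_tendsto_atTop_at_zero
    (Ψ : ℝ → ℝ)
    (hconv : ConvexOn ℝ Set.univ Ψ)
    (hnonneg : ∀ x, 0 ≤ Ψ x)
    (hzero : ∀ x, Ψ x = 0 ↔ x = 0)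
    (hint : ∀ l : ℝ, 0 < l → Integrable (fun t => Real.exp (-l * Ψ t))) :
    Tendsto (fun l : ℝ =>
        (∫ t, Ψ t * Real.exp (-l * Ψ t)) / (∫ t, Real.exp (-l * Ψ t)))
      (nhdsWithin 0 (Set.Ioi 0)) atTop := by
  have hΨ0 : Ψ 0 = 0 := (hzero 0).mpr rfl
  have hcont : Continuous Ψ := by
    exact continuousOn_univ.mp (hconv.continuousOn isOpen_univ)
  have hc1 : 0 < Ψ 1 :=
    lt_of_le_of_ne (hnonneg 1) (fun h => by simpa using (hzero 1).mp h.symm)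
  have hc1' : 0 < Ψ (-1) :=
    lt_of_le_of_ne (hnonneg (-1)) (fun h => by simpa using (hzero (-1)).mp h.symm)
  -- linear lower bounds
  have hlin : ∀ x : ℝ, 1 ≤ x → Ψ 1 * x ≤ Ψ x := by
    intro x hx
    have hx0 : (0:ℝ) < x := by linarith
    have h := hconv.2 (mem_univ x) (mem_univ (0:ℝ))
      (show (0:ℝ) ≤ 1/x by positivity)
      (show (0:ℝ) ≤ 1 - 1/x by rw [sub_nonneg]; exact div_le_one_of_le₀ hx hx0.le)
      (show 1/x + (1 - 1/x) = 1 by ring)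
    simp only [smul_eq_mul, mul_zero, add_zero, hΨ0] at h
    rw [one_div, inv_mul_cancel₀ hx0.ne'] at h
    calc Ψ 1 * x = x * Ψ 1 := by ring
      _ ≤ x * (x⁻¹ * Ψ x) := mul_le_mul_of_nonneg_left h hx0.le
      _ = Ψ x := by rw [← mul_assoc, mul_inv_cancel₀ hx0.ne', one_mul]
  have hlin' : ∀ x : ℝ, x ≤ -1 → Ψ (-1) * (-x) ≤ Ψ x := by
    intro x hx
    have hx0 : (0:ℝ) < -x := by linarith
    have h := hconv.2 (mem_univ x) (mem_univ (0:ℝ))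
      (show (0:ℝ) ≤ (-x)⁻¹ by positivity)
      (show (0:ℝ) ≤ 1 - (-x)⁻¹ by
        rw [sub_nonneg, inv_le_one_iff₀]; right; linarith)
      (show (-x)⁻¹ + (1 - (-x)⁻¹) = 1 by ring)
    have hax : (-x)⁻¹ • x + (1 - (-x)⁻¹) • (0:ℝ) = -1 := by
      rw [smul_eq_mul, smul_eq_mul, mul_zero, add_zero, inv_mul_eq_div, div_neg,
        div_self (by linarith : x < 0).ne]
    rw [hax] at h
    simp only [smul_eq_mul, mul_zero, add_zero, hΨ0] at h
    calc Ψ (-1) * (-x) = (-x) * Ψ (-1) := by ring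
      _ ≤ (-x) * ((-x)⁻¹ * Ψ x) := mul_le_mul_of_nonneg_left h hx0.le
      _ = Ψ x := by rw [← mul_assoc, mul_inv_cancel₀ hx0.ne', one_mul]
  -- finite measure of sublevel sets
  have hfin : ∀ K : ℝ, volume {x | Ψ x < K} < ⊤ := by
    intro K
    set A := max 1 (max (K / Ψ 1) (K / Ψ (-1))) with hA
    have hA1 : (1:ℝ) ≤ A := le_max_left _ _
    have hAK1 : K / Ψ 1 ≤ A := le_trans (le_max_left _ _) (le_max_right _ _)
    have hAK2 : K / Ψ (-1) ≤ A := le_trans (le_max_right _ _) (le_max_right _ _)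
    have hKA1 : K ≤ Ψ 1 * A := by rw [div_le_iff₀ hc1] at hAK1; linarith
    have hKA2 : K ≤ Ψ (-1) * A := by rw [div_le_iff₀ hc1'] at hAK2; linarith
    have hsub : {x | Ψ x < K} ⊆ Icc (-A) A := by
      intro x hx
      simp only [mem_setOf_eq] at hx
      constructor
      · by_contra h
        push_neg at h
        have hx1 : x ≤ -1 := by linarith
        have h1 := hlin' x hx1
        nlinarith [mul_lt_mul_of_pos_left (show A < -x by linarith) hc1']
      · by_contra h
        push_neg at h
        have hx1 : (1:ℝ) ≤ x := by linarith
        have h1 := hlin x hx1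
        nlinarith [mul_lt_mul_of_pos_left (show A < x by linarith) hc1]
    exact lt_of_le_of_lt (measure_mono hsub) measure_Icc_lt_top
  -- integral of exp tends to infinity
  have hItop : Tendsto (fun l => ∫ t, Real.exp (-l * Ψ t)) (nhdsWithin 0 (Set.Ioi 0)) atTop := by
    rw [tendsto_atTop]
    intro M
    set N := max 1 M with hNdef
    have hN1 : (1:ℝ) ≤ N := le_max_left _ _
    have hNM : M ≤ N := le_max_right _ _
    obtain ⟨x₀, hx₀, hB⟩ := isCompact_Icc.exists_isMaxOn
      (⟨0, by rw [mem_Icc]; constructor <;> linarith⟩ : (Icc (-N) N).Nonempty) hcont.continuousOn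
    set B := Ψ x₀ with hBdef
    have hB0 : 0 ≤ B := hnonneg _
    have hev : ∀ᶠ l in nhdsWithin (0:ℝ) (Set.Ioi 0), 1/2 < Real.exp (-l*B) := by
      have h1 : Tendsto (fun l : ℝ => Real.exp (-l*B)) (nhds 0) (nhds 1) := by
        have hc : Continuous fun l : ℝ => Real.exp (-l*B) := by continuity
        simpa using hc.tendsto 0
      exact (h1.mono_left nhdsWithin_le_nhds).eventually (eventually_gt_nhds (by norm_num))
    filter_upwards [hev, self_mem_nhdsWithin] with l hl hlmem
    have hlpos : 0 < l := hlmem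
    have hIcc : ∀ t ∈ Icc (-N) N, Real.exp (-l * B) ≤ Real.exp (-l * Ψ t) := by
      intro t ht
      apply Real.exp_le_exp.mpr
      have h4 : Ψ t ≤ Ψ x₀ := hB ht
      nlinarith
    have h2 : Real.exp (-l*B) * (volume (Icc (-N) N)).toReal
        ≤ ∫ t in Icc (-N) N, Real.exp (-l*Ψ t) :=
      setIntegral_ge_of_const_le_real measurableSet_Icc measure_Icc_lt_top.ne hIcc
        ((hint l hlpos).integrableOn)
    have h3 : ∫ t in Icc (-N) N, Real.exp (-l*Ψ t) ≤ ∫ t, Real.exp (-l*Ψ t) :=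
      setIntegral_le_integral (hint l hlpos)
        (Eventually.of_forall fun t => (Real.exp_pos _).le)
    have hvol : (volume (Icc (-N:ℝ) N)).toReal = 2*N := by
      rw [Real.volume_Icc, ENNReal.toReal_ofReal (by linarith)]
      ring
    rw [hvol] at h2
    nlinarith [mul_le_mul_of_nonneg_right hl.le (show (0:ℝ) ≤ 2*N by linarith)]
  -- integrability of Ψ * exp
  have hint2 : ∀ l : ℝ, 0 < l → Integrable (fun t => Ψ t * Real.exp (-l * Ψ t)) := by
    intro l hl
    have hg : Integrable (fun t => (2/l) * Real.exp (-(l/2) * Ψ t)) :=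
      (hint (l/2) (by positivity)).const_mul _
    refine hg.mono' ?_ ?_
    · exact (hcont.mul ((continuous_const.mul hcont).rexp)).aestronglyMeasurable
    · refine Eventually.of_forall fun t => ?_
      have hx := hnonneg t
      rw [Real.norm_eq_abs, abs_of_nonneg (mul_nonneg hx (Real.exp_pos _).le)]
      have key : Ψ t * Real.exp (-(l/2) * Ψ t) ≤ 2/l := by
        have hu : (l/2) * Ψ t ≤ Real.exp ((l/2) * Ψ t) := by
          have := Real.add_one_le_exp ((l/2) * Ψ t)
          linarith
        have hupos : 0 < Real.exp ((l/2) * Ψ t) := Real.exp_pos _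
        rw [neg_mul, Real.exp_neg]
        rw [mul_comm, ← div_eq_inv_mul, div_le_div_iff₀ hupos (by positivity)]
        nlinarith
      calc Ψ t * Real.exp (-l * Ψ t)
          = (Ψ t * Real.exp (-(l/2) * Ψ t)) * Real.exp (-(l/2) * Ψ t) := by
            rw [mul_assoc, ← Real.exp_add]; ring_nf
        _ ≤ (2/l) * Real.exp (-(l/2) * Ψ t) :=
            mul_le_mul_of_nonneg_right key (Real.exp_pos _).le
  -- main argument
  rw [tendsto_atTop]
  intro b
  set K := max 1 (2*b) with hKdef
  have hK1 : (1:ℝ) ≤ K := le_max_left _ _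
  have hKb : 2*b ≤ K := le_max_right _ _
  have hs : MeasurableSet {x | Ψ x < K} :=
    measurableSet_lt hcont.measurable measurable_const
  set m := (volume {x | Ψ x < K}).toReal with hmdef
  have hm0 : 0 ≤ m := ENNReal.toReal_nonneg
  filter_upwards [hItop.eventually_ge_atTop (max 1 (2*m)), self_mem_nhdsWithin]
    with l hIl hlmem
  have hlpos : 0 < l := hlmem
  set I := ∫ t, Real.exp (-l * Ψ t) with hIdef
  have hI1 : (1:ℝ) ≤ I := le_trans (le_max_left _ _) hIl
  have hI2 : 2*m ≤ I := le_trans (le_max_right _ _) hIl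
  have hIpos : 0 < I := by linarith
  -- lower bound on numerator
  have hnum : K * (I - m) ≤ ∫ t, Ψ t * Real.exp (-l * Ψ t) := by
    have hsplit : (∫ t in {x | Ψ x < K}, Ψ t * Real.exp (-l * Ψ t))
        + ∫ t in {x | Ψ x < K}ᶜ, Ψ t * Real.exp (-l * Ψ t)
        = ∫ t, Ψ t * Real.exp (-l * Ψ t) :=
      integral_add_compl hs (hint2 l hlpos)
    have hsplit2 : (∫ t in {x | Ψ x < K}, Real.exp (-l * Ψ t))
        + ∫ t in {x | Ψ x < K}ᶜ, Real.exp (-l * Ψ t) = I :=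
      integral_add_compl hs (hint l hlpos)
    have h1 : 0 ≤ ∫ t in {x | Ψ x < K}, Ψ t * Real.exp (-l * Ψ t) :=
      setIntegral_nonneg hs fun t _ => mul_nonneg (hnonneg t) (Real.exp_pos _).le
    have h2 : K * ∫ t in {x | Ψ x < K}ᶜ, Real.exp (-l * Ψ t)
        ≤ ∫ t in {x | Ψ x < K}ᶜ, Ψ t * Real.exp (-l * Ψ t) := by
      rw [← integral_const_mul]
      refine setIntegral_mono_on ((hint l hlpos).integrableOn.const_mul _)
        ((hint2 l hlpos).integrableOn) hs.compl ?_
      intro t ht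
      simp only [mem_compl_iff, mem_setOf_eq, not_lt] at ht
      exact mul_le_mul_of_nonneg_right ht (Real.exp_pos _).le
    have h3 : ∫ t in {x | Ψ x < K}, Real.exp (-l * Ψ t) ≤ m := by
      have hle : ∫ t in {x | Ψ x < K}, Real.exp (-l * Ψ t)
          ≤ ∫ _t in {x | Ψ x < K}, (1:ℝ) := by
        refine setIntegral_mono_on ((hint l hlpos).integrableOn)
          (integrableOn_const (hfin K).ne) hs ?_
        intro t _
        rw [Real.exp_le_one_iff]
        nlinarith [hnonneg t]
      simpa [hmdef, measureReal_def] using hle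
    nlinarith
  have hnum0 : 0 ≤ ∫ t, Ψ t * Real.exp (-l * Ψ t) :=
    integral_nonneg fun t => mul_nonneg (hnonneg t) (Real.exp_pos _).le
  rw [le_div_iff₀ hIpos]
  rcases le_or_gt b 0 with hb | hb
  · nlinarith
  · nlinarith [mul_le_mul_of_nonneg_left hI2 (by linarith : (0:ℝ) ≤ K),
      mul_nonneg (by linarith : (0:ℝ) ≤ K/2 - b) (by linarith : (0:ℝ) ≤ I)]
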